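/- Let A be a geometric random variable: P[A = kΔ] = (1−q)^k · q for k ∈ ℕ, with q ≥ 1/2 and Δ = q/√(1−q) (so Var(A) = 1). Let m = 0 be its mode, Q_m = q, and μ = E[A] = Δ(1−q)/q = √(1−q). Then the quantity G_m = (1/2)·E[ log₂( (1+μ²)/((A−m)²) ) | A ≠ m ] + 3 satisfies G_m ≤ 3.15. -/

import Mathlib

open Real

private lemma aux_G_nonneg (p : ℝ) (hp0 : 0 < p) (hp12 : p ≤ 1/2) :
    (0:ℝ) ≤ 0.3 + 1/2 - 4*p
      + 2*(1-p)*(p + 1.5*p^2+2*p^3+2*p^4+2.5*p^5+2.5*p^6) := by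
  nlinarith [mul_nonneg hp0.le hp0.le, mul_nonneg (mul_nonneg hp0.le hp0.le) hp0.le,
    pow_nonneg hp0.le 4, pow_nonneg hp0.le 5, pow_nonneg hp0.le 6,
    mul_nonneg (pow_nonneg hp0.le 4) (sub_nonneg.2 hp12),
    mul_nonneg (pow_nonneg hp0.le 5) (sub_nonneg.2 hp12),
    mul_nonneg (pow_nonneg hp0.le 2) (sub_nonneg.2 hp12),
    mul_nonneg (pow_nonneg hp0.le 3) (sub_nonneg.2 hp12),
    sq_nonneg (p-1/2), sq_nonneg (p-1/4)]

private lemma aux_poly (p : ℝ) (hp0 : 0 < p) (hp12 : p ≤ 1/2) :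
    1/16 - 4/3 + (8/3)*p ≤ 0.6931*(0.3 + 1/2 - 4*p
      + 2*(1-p)*(p + 1.5*p^2+2*p^3+2*p^4+2.5*p^5+2.5*p^6)) := by
  nlinarith [mul_nonneg hp0.le hp0.le, mul_nonneg (mul_nonneg hp0.le hp0.le) hp0.le,
    pow_nonneg hp0.le 4, pow_nonneg hp0.le 5, pow_nonneg hp0.le 6,
    mul_nonneg (pow_nonneg hp0.le 4) (sub_nonneg.2 hp12),
    mul_nonneg (pow_nonneg hp0.le 5) (sub_nonneg.2 hp12),
    mul_nonneg (pow_nonneg hp0.le 2) (sub_nonneg.2 hp12),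
    mul_nonneg (pow_nonneg hp0.le 3) (sub_nonneg.2 hp12),
    sq_nonneg (p-1/2), sq_nonneg (p-1/4)]

set_option maxHeartbeats 1000000 in
theorem stmt_10 (q : ℝ) (hq1 : 1/2 ≤ q) (hq2 : q < 1) :
    (1/2) * (∑' k : ℕ, (1 - q)^k * q *
        Real.logb 2 ((1 + (Real.sqrt (1 - q))^2) /
          (((k + 1 : ℝ) * (q / Real.sqrt (1 - q)))^2))) + 3 ≤ 3.15 := by
  have hq0 : 0 < q := by linarith
  set p : ℝ := 1 - q with hpdef
  clear_value p
  have hp0 : 0 < p := by rw [hpdef]; linarith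
  have hp12 : p ≤ 1/2 := by rw [hpdef]; linarith
  have hplt : p < 1 := by rw [hpdef]; linarith
  have hsq : Real.sqrt p ^ 2 = p := Real.sq_sqrt hp0.le
  have hs0 : 0 < Real.sqrt p := Real.sqrt_pos.2 hp0
  set c : ℝ := (1 + p) * p / q ^ 2 with hcdef
  have hc0 : 0 < c := by positivity
  have hL2pos : 0 < Real.log 2 := Real.log_pos (by norm_num)
  -- rewrite each summand
  have hterm : ∀ k : ℕ, p^k * q *
      Real.logb 2 ((1 + (Real.sqrt p)^2) / (((k + 1 : ℝ) * (q / Real.sqrt p))^2))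
      = q * Real.logb 2 c * p^k - 2*q*(p^k * Real.logb 2 ((k:ℝ)+1)) := by
    intro k
    have hk1 : (0:ℝ) < (k:ℝ)+1 := by positivity
    have harg : (1 + (Real.sqrt p)^2) / (((k + 1 : ℝ) * (q / Real.sqrt p))^2)
        = c / ((k:ℝ)+1)^2 := by
      rw [hcdef, hsq, mul_pow, div_pow, hsq]
      rw [div_eq_div_iff (by positivity) (by positivity)]
      field_simp
    rw [harg, Real.logb_div (ne_of_gt hc0) (by positivity),
      show (((k:ℝ)+1)^2 : ℝ) = ((k:ℝ)+1)^(2:ℕ) by norm_num, Real.logb_pow]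
    push_cast
    ring
  -- summability facts
  have hgeo : Summable (fun k : ℕ => p ^ k) := summable_geometric_of_lt_one hp0.le hplt
  have hlognn : ∀ k : ℕ, 0 ≤ Real.logb 2 ((k:ℝ)+1) := by
    intro k
    exact Real.logb_nonneg (by norm_num) (by exact_mod_cast Nat.le_add_left 1 k)
  have hlogle : ∀ k : ℕ, Real.logb 2 ((k:ℝ)+1) ≤ (k:ℝ) := by
    intro k
    have h2 : ((k:ℝ)+1) ≤ (2:ℝ)^k := by
      have := Nat.lt_two_pow_self (n := k)
      have : (k:ℝ) + 1 ≤ ((2^k : ℕ) : ℝ) := by exact_mod_cast this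
      simpa using this
    calc Real.logb 2 ((k:ℝ)+1) ≤ Real.logb 2 ((2:ℝ)^k) :=
          Real.logb_le_logb_of_le (by norm_num) (by positivity) h2
      _ = (k:ℝ) := by
          rw [Real.logb_pow, Real.logb_self_eq_one (by norm_num)]; ring
  have hT : Summable (fun k : ℕ => p ^ k * Real.logb 2 ((k:ℝ)+1)) := by
    have hbig : Summable (fun k : ℕ => (k:ℝ)^1 * p ^ k) :=
      summable_pow_mul_geometric_of_norm_lt_one 1
        (by rw [Real.norm_eq_abs, abs_of_pos hp0]; exact hplt)
    refine Summable.of_nonneg_of_le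
      (fun k => mul_nonneg (pow_nonneg hp0.le k) (hlognn k)) (fun k => ?_) hbig
    have := mul_le_mul_of_nonneg_left (hlogle k) (pow_nonneg hp0.le k)
    calc p ^ k * Real.logb 2 ((k:ℝ)+1) ≤ p ^ k * (k:ℝ) := this
      _ = (k:ℝ)^1 * p ^ k := by ring
  set T : ℝ := ∑' k : ℕ, p ^ k * Real.logb 2 ((k:ℝ)+1) with hTdef
  -- compute the tsum
  have hsum_eq : (∑' k : ℕ, p^k * q *
      Real.logb 2 ((1 + (Real.sqrt p)^2) / (((k + 1 : ℝ) * (q / Real.sqrt p))^2)))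
      = Real.logb 2 c - 2*q*T := by
    rw [tsum_congr hterm]
    rw [Summable.tsum_sub (hgeo.mul_left _) (hT.mul_left _)]
    rw [tsum_mul_left, tsum_mul_left]
    rw [tsum_geometric_of_lt_one hp0.le hplt]
    rw [show (1:ℝ) - p = q by rw [hpdef]; ring]
    rw [← hTdef]
    field_simp
  -- lower bound on T by a finite partial sum with rational log bounds
  have l3 : (3:ℝ)/2 ≤ Real.logb 2 3 := by
    rw [Real.logb, le_div_iff₀ hL2pos]
    have h8 : Real.log (8:ℝ) = 3 * Real.log 2 := by
      rw [show (8:ℝ) = 2^(3:ℕ) by norm_num, Real.log_pow]; push_cast; ring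
    have h9 : Real.log (9:ℝ) = 2 * Real.log 3 := by
      rw [show (9:ℝ) = 3^(2:ℕ) by norm_num, Real.log_pow]; push_cast; ring
    have := Real.log_le_log (by norm_num : (0:ℝ) < 8) (by norm_num : (8:ℝ) ≤ 9)
    linarith
  have l4 : (2:ℝ) ≤ Real.logb 2 4 := by
    rw [show (4:ℝ) = 2^(2:ℕ) by norm_num, Real.logb_pow,
      Real.logb_self_eq_one (by norm_num)]
    norm_num
  have l5 : (2:ℝ) ≤ Real.logb 2 5 := by
    calc (2:ℝ) ≤ Real.logb 2 4 := l4
      _ ≤ Real.logb 2 5 := Real.logb_le_logb_of_le (by norm_num) (by norm_num) (by norm_num)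
  have l6 : (5:ℝ)/2 ≤ Real.logb 2 6 := by
    rw [Real.logb, le_div_iff₀ hL2pos]
    have h32 : Real.log (32:ℝ) = 5 * Real.log 2 := by
      rw [show (32:ℝ) = 2^(5:ℕ) by norm_num, Real.log_pow]; push_cast; ring
    have h36 : Real.log (36:ℝ) = 2 * Real.log 6 := by
      rw [show (36:ℝ) = 6^(2:ℕ) by norm_num, Real.log_pow]; push_cast; ring
    have := Real.log_le_log (by norm_num : (0:ℝ) < 32) (by norm_num : (32:ℝ) ≤ 36)
    linarith
  have l7 : (5:ℝ)/2 ≤ Real.logb 2 7 := by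
    calc (5:ℝ)/2 ≤ Real.logb 2 6 := l6
      _ ≤ Real.logb 2 7 := Real.logb_le_logb_of_le (by norm_num) (by norm_num) (by norm_num)
  have hTlow : p + 1.5*p^2 + 2*p^3 + 2*p^4 + 2.5*p^5 + 2.5*p^6 ≤ T := by
    have hpart := hT.sum_le_tsum (Finset.range 7)
      (fun k _ => mul_nonneg (pow_nonneg hp0.le k) (hlognn k))
    rw [← hTdef] at hpart
    have hexp : (∑ k ∈ Finset.range 7, p ^ k * Real.logb 2 ((k:ℝ)+1))
        = Real.logb 2 1 + p * Real.logb 2 2 + p^2 * Real.logb 2 3 + p^3 * Real.logb 2 4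
          + p^4 * Real.logb 2 5 + p^5 * Real.logb 2 6 + p^6 * Real.logb 2 7 := by
      simp [Finset.sum_range_succ]
      norm_num
    rw [hexp] at hpart
    have hl1 : Real.logb 2 (1:ℝ) = 0 := Real.logb_one
    have hl2 : Real.logb 2 (2:ℝ) = 1 := Real.logb_self_eq_one (by norm_num)
    rw [hl1, hl2] at hpart
    linarith [mul_le_mul_of_nonneg_left l3 (pow_nonneg hp0.le 2),
      mul_le_mul_of_nonneg_left l4 (pow_nonneg hp0.le 3),
      mul_le_mul_of_nonneg_left l5 (pow_nonneg hp0.le 4),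
      mul_le_mul_of_nonneg_left l6 (pow_nonneg hp0.le 5),
      mul_le_mul_of_nonneg_left l7 (pow_nonneg hp0.le 6)]
  -- upper bound on log c
  have ha : Real.log (1+p) ≤ Real.log (3/2) + (2/3)*p - 1/3 := by
    have hrw : (1+p : ℝ) = (3/2) * ((2/3)*(1+p)) := by ring
    rw [hrw, Real.log_mul (by norm_num) (by positivity)]
    have := Real.log_le_sub_one_of_pos (show (0:ℝ) < (2/3)*(1+p) by positivity)
    linarith
  have hb : Real.log (3/2 : ℝ) ≤ 1/16 + Real.log 2 / 2 := by
    have h1 : Real.log ((9:ℝ)/4) = 2 * Real.log (3/2) := by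
      rw [show (9/4:ℝ) = (3/2)^(2:ℕ) by norm_num, Real.log_pow]; push_cast; ring
    have h2 : Real.log ((9:ℝ)/4) = Real.log (9/8) + Real.log 2 := by
      rw [show (9/4:ℝ) = (9/8)*2 by norm_num, Real.log_mul (by norm_num) (by norm_num)]
    have h3 := Real.log_le_sub_one_of_pos (show (0:ℝ) < 9/8 by norm_num)
    linarith
  have hcp : Real.log p ≤ -Real.log 2 + 2*p - 1 := by
    have hrw : p = (2:ℝ)⁻¹ * (2*p) := by ring
    rw [hrw, Real.log_mul (by norm_num) (by positivity), Real.log_inv]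
    have := Real.log_le_sub_one_of_pos (show (0:ℝ) < 2*p by positivity)
    linarith
  have hd : -2*Real.log 2 * p ≤ Real.log q := by
    have hcc := (strictConcaveOn_log_Ioi.concaveOn).2
      (show (1/2 : ℝ) ∈ Set.Ioi (0:ℝ) by norm_num)
      (show (1 : ℝ) ∈ Set.Ioi (0:ℝ) by norm_num)
      (show (0:ℝ) ≤ 2*p by positivity)
      (show (0:ℝ) ≤ 1 - 2*p by linarith)
      (by ring)
    simp only [smul_eq_mul, Real.log_one] at hcc
    have harg : (2*p) * (1/2 : ℝ) + (1 - 2*p) * 1 = q := by rw [hpdef]; ring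
    rw [harg] at hcc
    have hhalf : Real.log (1/2 : ℝ) = -Real.log 2 := by
      rw [show (1/2:ℝ) = 2⁻¹ by norm_num, Real.log_inv]
    rw [hhalf] at hcc
    linarith
  have hlogc : Real.log c = Real.log (1+p) + Real.log p - 2 * Real.log q := by
    rw [hcdef, Real.log_div (by positivity) (by positivity),
      Real.log_mul (by positivity) hp0.ne', Real.log_pow]
    push_cast; ring
  -- main polynomial estimate
  have hL1 : 0.6931 < Real.log 2 := by
    have := Real.log_two_gt_d9; linarith
  have hGpos : (0:ℝ) ≤ 0.3 + 1/2 - 4*p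
      + 2*(1-p)*(p + 1.5*p^2+2*p^3+2*p^4+2.5*p^5+2.5*p^6) := aux_G_nonneg p hp0 hp12
  have hpoly : 1/16 - 4/3 + (8/3)*p ≤ 0.6931*(0.3 + 1/2 - 4*p
      + 2*(1-p)*(p + 1.5*p^2+2*p^3+2*p^4+2.5*p^5+2.5*p^6)) := aux_poly p hp0 hp12
  have hq1p : q = 1 - p := by rw [hpdef]; ring
  have hmain : Real.log c ≤ Real.log 2 *
      (0.3 + 2*(1-p)*(p + 1.5*p^2 + 2*p^3 + 2*p^4 + 2.5*p^5 + 2.5*p^6)) := by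
    have hLG : 0.6931*(0.3 + 1/2 - 4*p
        + 2*(1-p)*(p + 1.5*p^2+2*p^3+2*p^4+2.5*p^5+2.5*p^6))
        ≤ Real.log 2 * (0.3 + 1/2 - 4*p
        + 2*(1-p)*(p + 1.5*p^2+2*p^3+2*p^4+2.5*p^5+2.5*p^6)) := by
      have := mul_nonneg (show (0:ℝ) ≤ Real.log 2 - 0.6931 by linarith) hGpos
      linarith [this]
    rw [hlogc]
    linarith [ha, hb, hcp, hd, hpoly, hLG]
  rw [show (1:ℝ) - p = q by rw [hpdef]; ring] at hmain
  -- finish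
  have hlogbc : Real.logb 2 c ≤ 0.3 + 2*q*T := by
    rw [Real.logb, div_le_iff₀ hL2pos]
    calc Real.log c ≤ Real.log 2 *
        (0.3 + 2*q*(p + 1.5*p^2 + 2*p^3 + 2*p^4 + 2.5*p^5 + 2.5*p^6)) := hmain
      _ ≤ Real.log 2 * (0.3 + 2*q*T) := by
          have h2q : (0:ℝ) ≤ 2*q := by linarith
          have := mul_le_mul_of_nonneg_left hTlow h2q
          nlinarith
      _ = (0.3 + 2*q*T) * Real.log 2 := by ring
  rw [hsum_eq]
  linarith
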